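/- Let r > 0, h ∈ ℝ, c = √(r² + h²), and let L > 2πc. Let γ : [0,L] → ℝ³ be the unit-speed helix γ(s) = (r·cos(s/c), r·sin(s/c), hs/c). Assume every global minimizer of the bending energy B, among curves in W^{2,2}_arc(0,L;ℝ³) with the same clamped boundary data as γ, is of class C²([0,L];ℝ³). Then γ is not a global minimizer of B among curves ξ ∈ W^{2,2}_arc(0,L;ℝ³) satisfying ξ(0) = γ(0), ξ(L) = γ(L), ξ'(0) = γ'(0), ξ'(L) = γ'(L); i.e., a helical elastica with more than one turn is not minimal in the set of clamped curves of fixed length in ℝ³. -/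

import Mathlib

open MeasureTheory Set Filter RealInnerProductSpace
open Topology

noncomputable section

/-- Euclidean 3-space. -/
abbrev R3 := EuclideanSpace ℝ (Fin 3)

/-- The point of `ℝ³` with coordinates `(a, b, c)`. -/
def e3 (a b c : ℝ) : R3 := (WithLp.equiv 2 (Fin 3 → ℝ)).symm ![a, b, c]

/-- `γ` (restricted to `[0,L]`) is an arclength parameterized `W^{2,2}` space curve:
`γ` is `C¹` and unit-speed on `[0,L]`, `γ'` is absolutely continuous (it is recovered from
its a.e. derivative by integration), and the second derivative lies in `L²(0,L)`. -/
structure ArcCurve3 (L : ℝ) (γ : ℝ → R3) : Prop where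
  c1 : ContDiffOn ℝ 1 γ (Icc 0 L)
  unit : ∀ s ∈ Icc (0:ℝ) L, ‖deriv γ s‖ = 1
  ac : ∀ a ∈ Icc (0:ℝ) L, ∀ b ∈ Icc (0:ℝ) L,
    deriv γ b - deriv γ a = ∫ s in a..b, deriv (deriv γ) s
  l2 : MemLp (fun s => deriv (deriv γ) s) 2 (volume.restrict (Icc 0 L))

/-- The bending energy `B(γ) = ∫₀^L |γ''|² ds`. -/
def Ben (L : ℝ) (γ : ℝ → R3) : ℝ := ∫ s in Icc (0:ℝ) L, ‖deriv (deriv γ) s‖ ^ 2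

/-- The `W^{2,2}`-distance between two curves on `[0,L]`. -/
def W22Dist (L : ℝ) (γ ξ : ℝ → R3) : ℝ :=
  Real.sqrt (∫ s in Icc (0:ℝ) L, (‖γ s - ξ s‖ ^ 2 + ‖deriv γ s - deriv ξ s‖ ^ 2 +
    ‖deriv (deriv γ) s - deriv (deriv ξ) s‖ ^ 2))

/-- The admissible class `A_c` with clamped boundary conditions in `ℝ³`. -/
def Adm3 (L : ℝ) (P0 P1 V0 V1 : R3) (γ : ℝ → R3) : Prop :=
  ArcCurve3 L γ ∧ γ 0 = P0 ∧ γ L = P1 ∧ deriv γ 0 = V0 ∧ deriv γ L = V1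

/-- Global minimizer of the bending energy in `A_c`. -/
def IsGlobalMin3 (L : ℝ) (P0 P1 V0 V1 : R3) (γ : ℝ → R3) : Prop :=
  Adm3 L P0 P1 V0 V1 γ ∧ ∀ ξ, Adm3 L P0 P1 V0 V1 ξ → Ben L γ ≤ Ben L ξ

/-- Local minimizer of the bending energy in `A_c` (w.r.t. the `W^{2,2}` topology). -/
def IsLocalMin3 (L : ℝ) (P0 P1 V0 V1 : R3) (γ : ℝ → R3) : Prop :=
  Adm3 L P0 P1 V0 V1 γ ∧
    ∃ δ > 0, ∀ ξ, Adm3 L P0 P1 V0 V1 ξ → W22Dist L γ ξ < δ → Ben L γ ≤ Ben L ξ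

/- ## Auxiliary lemmas -/

lemma norm_e3 (a b c : ℝ) : ‖e3 a b c‖ = Real.sqrt (a^2 + b^2 + c^2) := by
  rw [EuclideanSpace.norm_eq]
  simp [e3, Fin.sum_univ_three, sq_abs, Real.norm_eq_abs]

lemma hasDerivAt_e3 {f g k : ℝ → ℝ} {f' g' k' x : ℝ} (hf : HasDerivAt f f' x)
    (hg : HasDerivAt g g' x) (hk : HasDerivAt k k' x) :
    HasDerivAt (fun s => e3 (f s) (g s) (k s)) (e3 f' g' k') x := by
  have hF : HasDerivAt (fun s => (![f s, g s, k s] : Fin 3 → ℝ)) ![f', g', k'] x := by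
    rw [hasDerivAt_pi]
    intro i
    fin_cases i <;> simpa using ‹_›
  have := ((EuclideanSpace.equiv (Fin 3) ℝ).symm.toContinuousLinearMap.hasFDerivAt
      (x := (![f x, g x, k x] : Fin 3 → ℝ))).comp_hasDerivAt x hF
  exact this

lemma cont_e3 {f g k : ℝ → ℝ} (hf : Continuous f) (hg : Continuous g) (hk : Continuous k) :
    Continuous (fun s => e3 (f s) (g s) (k s)) := by
  have : Continuous (fun s => (![f s, g s, k s] : Fin 3 → ℝ)) := by
    apply continuous_pi; intro i; fin_cases i <;> simpa
  exact ((EuclideanSpace.equiv (Fin 3) ℝ).symm.continuous).comp this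

/-- non-minimality of helices with more than one turn. -/
theorem helix_not_minimal (r h c L : ℝ) (hr : 0 < r)
    (hc : c = Real.sqrt (r ^ 2 + h ^ 2)) (hL : 2 * Real.pi * c < L)
    (γ : ℝ → R3)
    (hγdef : ∀ s, γ s = e3 (r * Real.cos (s / c)) (r * Real.sin (s / c)) (h * s / c))
    (H : ∀ ξ, IsGlobalMin3 L (γ 0) (γ L) (deriv γ 0) (deriv γ L) ξ →
      ContDiffOn ℝ 2 ξ (Icc 0 L)) :
    ¬ IsGlobalMin3 L (γ 0) (γ L) (deriv γ 0) (deriv γ L) γ := by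
  intro Hmin
  -- basic positivity facts
  have hrr : (0:ℝ) < r ^ 2 + h ^ 2 := by positivity
  have hc0 : 0 < c := hc ▸ Real.sqrt_pos.mpr hrr
  have hcne : c ≠ 0 := ne_of_gt hc0
  have hc2 : c ^ 2 = r ^ 2 + h ^ 2 := by rw [hc]; exact Real.sq_sqrt hrr.le
  have hπ : (0:ℝ) < Real.pi := Real.pi_pos
  set P : ℝ := 2 * Real.pi * c with hPdef
  have hP0 : 0 < P := by positivity
  have hL0 : 0 < L := lt_trans hP0 hL
  set s₁ : ℝ := (L - P) / 2 with hs₁def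
  set s₂ : ℝ := (L + P) / 2 with hs₂def
  have hs₁0 : 0 < s₁ := by simp only [hs₁def]; linarith
  have h12 : s₁ < s₂ := by simp only [hs₁def, hs₂def]; linarith
  have hs₂L : s₂ < L := by simp only [hs₂def]; linarith
  have hLs₁ : L - s₁ = s₂ := by simp only [hs₁def, hs₂def]; ring
  have hLs₂ : L - s₂ = s₁ := by simp only [hs₁def, hs₂def]; ring
  have hs₂P : s₂ = s₁ + P := by simp only [hs₁def, hs₂def]; ring
  -- the tangent and curvature vector fields of the helix
  set u : ℝ → R3 := fun s => e3 (-(r/c) * Real.sin (s/c)) ((r/c) * Real.cos (s/c)) (h/c)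
    with hudef
  set w : ℝ → R3 := fun s => e3 (-(r/c^2) * Real.cos (s/c)) (-(r/c^2) * Real.sin (s/c)) 0
    with hwdef
  have hdiv : ∀ s : ℝ, HasDerivAt (fun s : ℝ => s / c) (1/c) s := by
    intro s; simpa using (hasDerivAt_id s).div_const c
  have hγu : ∀ s, HasDerivAt γ (u s) s := by
    intro s
    have h1 : HasDerivAt (fun s => r * Real.cos (s/c)) (-(r/c) * Real.sin (s/c)) s := by
      have := (((Real.hasDerivAt_cos (s/c)).comp s (hdiv s))).const_mul r
      exact this.congr_deriv (by ring)
    have h2 : HasDerivAt (fun s => r * Real.sin (s/c)) ((r/c) * Real.cos (s/c)) s := by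
      have := (((Real.hasDerivAt_sin (s/c)).comp s (hdiv s))).const_mul r
      exact this.congr_deriv (by ring)
    have h3 : HasDerivAt (fun s => h * s / c) (h/c) s := by
      have := ((hasDerivAt_id s).const_mul h).div_const c
      simpa [mul_comm] using this
    have := hasDerivAt_e3 h1 h2 h3
    have hγe : γ = fun s => e3 (r * Real.cos (s / c)) (r * Real.sin (s / c)) (h * s / c) :=
      funext hγdef
    rw [hγe]
    exact this
  have huw : ∀ s, HasDerivAt u (w s) s := by
    intro s
    have h1 : HasDerivAt (fun s => -(r/c) * Real.sin (s/c)) (-(r/c^2) * Real.cos (s/c)) s := by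
      have := (((Real.hasDerivAt_sin (s/c)).comp s (hdiv s))).const_mul (-(r/c))
      exact this.congr_deriv (by ring)
    have h2 : HasDerivAt (fun s => (r/c) * Real.cos (s/c)) (-(r/c^2) * Real.sin (s/c)) s := by
      have := (((Real.hasDerivAt_cos (s/c)).comp s (hdiv s))).const_mul (r/c)
      exact this.congr_deriv (by ring)
    exact hasDerivAt_e3 h1 h2 (hasDerivAt_const s (h/c))
  have hγderiv : deriv γ = u := funext fun s => (hγu s).deriv
  have huderiv : deriv u = w := funext fun s => (huw s).deriv
  have hucont : Continuous u := by
    rw [hudef]; exact cont_e3 (by fun_prop) (by fun_prop) continuous_const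
  have hwcont : Continuous w := by
    rw [hwdef]; exact cont_e3 (by fun_prop) (by fun_prop) continuous_const
  -- norms
  have hnormu : ∀ s, ‖u s‖ = 1 := by
    intro s
    rw [hudef]
    simp only
    rw [norm_e3]
    have hsc := Real.sin_sq_add_cos_sq (s/c)
    have e1 : (-(r/c) * Real.sin (s/c))^2 + ((r/c) * Real.cos (s/c))^2 + (h/c)^2
        = (r/c)^2 * (Real.sin (s/c)^2 + Real.cos (s/c)^2) + (h/c)^2 := by ring
    have e2 : (r/c)^2 * (1:ℝ) + (h/c)^2 = (r^2 + h^2)/c^2 := by ring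
    rw [e1, hsc, e2, ← hc2, div_self (pow_ne_zero 2 hcne), Real.sqrt_one]
  have hnormw : ∀ s, ‖w s‖ = r / c^2 := by
    intro s
    rw [hwdef]
    simp only
    rw [norm_e3]
    have hsc := Real.sin_sq_add_cos_sq (s/c)
    have e1 : (-(r/c^2) * Real.cos (s/c))^2 + (-(r/c^2) * Real.sin (s/c))^2 + 0^2
        = (r/c^2)^2 * (Real.sin (s/c)^2 + Real.cos (s/c)^2) := by ring
    rw [e1, hsc, mul_one, Real.sqrt_sq (by positivity)]
  -- periodicity
  have hdivP : ∀ s : ℝ, (s + P) / c = s / c + 2 * Real.pi := by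
    intro s; rw [hPdef]; field_simp
  have huper : ∀ s, u (s + P) = u s := by
    intro s
    rw [hudef]; simp only
    rw [hdivP, Real.sin_add_two_pi, Real.cos_add_two_pi]
  have hwper : ∀ s, w (s + P) = w s := by
    intro s
    rw [hwdef]; simp only
    rw [hdivP, Real.sin_add_two_pi, Real.cos_add_two_pi]
  have hu21 : u s₂ = u s₁ := by rw [hs₂P, huper]
  have hw21 : w s₂ = w s₁ := by rw [hs₂P, hwper]
  -- the competitor curve: reflect the middle period through the midpoint of its endpoints
  set ξ : ℝ → R3 := fun s => if s ≤ s₁ then γ s else if s ≤ s₂ then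
      γ s₁ + γ s₂ - γ (L - s) else γ s with hξdef
  set T : ℝ → R3 := fun s => if s ≤ s₁ then u s else if s ≤ s₂ then u (L - s) else u s
    with hTdef
  set g : ℝ → R3 := fun s => if s < s₁ then w s else if s < s₂ then -w (L - s) else w s
    with hgdef
  -- the middle branch η and its derivatives
  set η : ℝ → R3 := fun s => γ s₁ + γ s₂ - γ (L - s) with hηdef
  have hη' : ∀ s, HasDerivAt η (u (L - s)) s := by
    intro s
    have h1 : HasDerivAt (fun s : ℝ => L - s) (-1) s := by
      simpa using ((hasDerivAt_id s).const_sub L)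
    have h2 : HasDerivAt (fun s : ℝ => γ (L - s)) ((-1 : ℝ) • u (L - s)) s :=
      (hγu (L - s)).scomp s h1
    have := h2.const_sub (γ s₁ + γ s₂)
    rw [hηdef]
    simpa using this
  have hη'' : ∀ s, HasDerivAt (fun s => u (L - s)) (-w (L - s)) s := by
    intro s
    have h1 : HasDerivAt (fun s : ℝ => L - s) (-1) s := by
      simpa using ((hasDerivAt_id s).const_sub L)
    have h2 : HasDerivAt (fun s : ℝ => u (L - s)) ((-1 : ℝ) • w (L - s)) s :=
      (huw (L - s)).scomp s h1
    simpa using h2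
  have hηs₁ : η s₁ = γ s₁ := by rw [hηdef]; simp only [hLs₁]; abel
  have hηs₂ : η s₂ = γ s₂ := by rw [hηdef]; simp only [hLs₂]; abel
  -- ξ agrees with η on [s₁, s₂]
  have hξη : EqOn ξ η (Icc s₁ s₂) := by
    intro s hs
    rw [hξdef]
    simp only
    rcases eq_or_lt_of_le hs.1 with he | hlt
    · rw [if_pos he.symm.le, ← he, hηs₁]
    · rw [if_neg (not_le.mpr hlt), if_pos hs.2]
  have hξγ₁ : EqOn ξ γ (Iic s₁) := by
    intro s hs; rw [hξdef]; simp only [if_pos (mem_Iic.mp hs)]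
  have hξγ₂ : EqOn ξ γ (Ici s₂) := by
    intro s hs
    rcases eq_or_lt_of_le (mem_Ici.mp hs) with he | hlt
    · rw [← he, hξη ⟨h12.le, le_refl s₂⟩, hηs₂]
    · rw [hξdef]
      simp only [if_neg (not_le.mpr (lt_trans h12 hlt)), if_neg (not_le.mpr hlt)]
  -- ξ is differentiable everywhere with derivative T
  have hξT : ∀ s, HasDerivAt ξ (T s) s := by
    intro s
    rcases lt_trichotomy s s₁ with hlt | heq | hgt
    · have : ξ =ᶠ[nhds s] γ := by
        filter_upwards [Iio_mem_nhds hlt] with t ht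
        exact hξγ₁ (mem_Iic.mpr (le_of_lt ht))
      have hd := (hγu s).congr_of_eventuallyEq this
      have : T s = u s := by rw [hTdef]; simp only [if_pos hlt.le]
      rw [this]; exact hd
    · -- s = s₁ : glue left (γ) and right (η)
      subst heq
      have hTs : T s₁ = u s₁ := by rw [hTdef]; simp only [if_pos le_rfl]
      rw [hTs]
      have hl : HasDerivWithinAt ξ (u s₁) (Iic s₁) s₁ :=
        ((hγu s₁).hasDerivWithinAt).congr hξγ₁ (hξγ₁ self_mem_Iic)
      have hr : HasDerivWithinAt ξ (u s₁) (Ici s₁) s₁ := by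
        have hη₁ : HasDerivWithinAt η (u s₁) (Ici s₁) s₁ := by
          have := (hη' s₁).hasDerivWithinAt (s := Ici s₁)
          rwa [hLs₁, hu21] at this
        refine hη₁.congr_of_eventuallyEq ?_ (hξη ⟨le_rfl, h12.le⟩)
        have hm : Icc s₁ s₂ ∈ 𝓝[Ici s₁] s₁ := by
          have := Filter.inter_mem (self_mem_nhdsWithin (a := s₁) (s := Ici s₁))
            (mem_nhdsWithin_of_mem_nhds (Iic_mem_nhds h12))
          rwa [Ici_inter_Iic] at this
        filter_upwards [hm] with t ht using hξη ht
      have := hl.union hr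
      rw [Iic_union_Ici] at this
      exact this.hasDerivAt (by simp)
    · rcases lt_trichotomy s s₂ with hlt2 | heq2 | hgt2
      · have : ξ =ᶠ[nhds s] η := by
          filter_upwards [Ioo_mem_nhds hgt hlt2] with t ht
          exact hξη ⟨ht.1.le, ht.2.le⟩
        have hd := (hη' s).congr_of_eventuallyEq this
        have : T s = u (L - s) := by
          rw [hTdef]; simp only [if_neg (not_le.mpr hgt), if_pos hlt2.le]
        rw [this]; exact hd
      · -- s = s₂ : glue left (η) and right (γ)
        subst heq2
        have hTs : T s₂ = u (L - s₂) := by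
          rw [hTdef]; simp only [if_neg (not_le.mpr hgt), if_pos le_rfl]
        rw [hTs, hLs₂]
        have hl : HasDerivWithinAt ξ (u s₁) (Iic s₂) s₂ := by
          have hη₂ : HasDerivWithinAt η (u s₁) (Iic s₂) s₂ := by
            have := (hη' s₂).hasDerivWithinAt (s := Iic s₂)
            rwa [hLs₂] at this
          refine hη₂.congr_of_eventuallyEq ?_ (hξη ⟨h12.le, le_rfl⟩)
          have hm : Icc s₁ s₂ ∈ 𝓝[Iic s₂] s₂ := by
            have := Filter.inter_mem
              (mem_nhdsWithin_of_mem_nhds (Ici_mem_nhds h12))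
              (self_mem_nhdsWithin (a := s₂) (s := Iic s₂))
            rwa [Ici_inter_Iic] at this
          filter_upwards [hm] with t ht using hξη ht
        have hr : HasDerivWithinAt ξ (u s₁) (Ici s₂) s₂ := by
          have := (hγu s₂).hasDerivWithinAt (s := Ici s₂)
          rw [hu21] at this
          exact this.congr hξγ₂ (hξγ₂ self_mem_Ici)
        have := hl.union hr
        rw [Iic_union_Ici] at this
        exact this.hasDerivAt (by simp)
      · have : ξ =ᶠ[nhds s] γ := by
          filter_upwards [Ioi_mem_nhds hgt2] with t ht
          exact hξγ₂ (mem_Ici.mpr (le_of_lt ht))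
        have hd := (hγu s).congr_of_eventuallyEq this
        have : T s = u s := by
          rw [hTdef]
          simp only [if_neg (not_le.mpr (lt_trans h12 hgt2)), if_neg (not_le.mpr hgt2)]
        rw [this]; exact hd
  have hξderiv : deriv ξ = T := funext fun s => (hξT s).deriv
  -- T is continuous
  have hTcont : Continuous T := by
    rw [hTdef]
    have hinner : Continuous (fun s => if s ≤ s₂ then u (L - s) else u s) := by
      refine Continuous.if_le ?_ hucont continuous_id continuous_const ?_
      · exact hucont.comp (continuous_const.sub continuous_id)
      · intro x hx; rw [hx, hLs₂, hu21]
    refine Continuous.if_le hucont hinner continuous_id continuous_const ?_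
    intro x hx
    rw [hx]
    simp only [if_pos h12.le, hLs₁, hu21]
  -- T is differentiable away from the two junctions, with derivative g
  have hTg : ∀ s, s ≠ s₁ → s ≠ s₂ → HasDerivAt T (g s) s := by
    intro s hne1 hne2
    rcases lt_trichotomy s s₁ with hlt | heq | hgt
    · have hev : T =ᶠ[nhds s] u := by
        filter_upwards [Iio_mem_nhds hlt] with t ht
        rw [hTdef]; simp only [if_pos (mem_Iio.mp ht).le]
      have : g s = w s := by rw [hgdef]; simp only [if_pos hlt]
      rw [this]
      exact (huw s).congr_of_eventuallyEq hev
    · exact absurd heq hne1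
    · rcases lt_trichotomy s s₂ with hlt2 | heq2 | hgt2
      · have hev : T =ᶠ[nhds s] (fun s => u (L - s)) := by
          filter_upwards [Ioo_mem_nhds hgt hlt2] with t ht
          rw [hTdef]; simp only [if_neg (not_le.mpr ht.1), if_pos ht.2.le]
        have : g s = -w (L - s) := by
          rw [hgdef]; simp only [if_neg (not_lt.mpr hgt.le), if_pos hlt2]
        rw [this]
        exact (hη'' s).congr_of_eventuallyEq hev
      · exact absurd heq2 hne2
      · have hev : T =ᶠ[nhds s] u := by
          filter_upwards [Ioi_mem_nhds hgt2] with t ht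
          rw [hTdef]
          simp only [if_neg (not_le.mpr (lt_trans h12 ht)), if_neg (not_le.mpr (mem_Ioi.mp ht))]
        have : g s = w s := by
          rw [hgdef]
          simp only [if_neg (not_lt.mpr (le_of_lt (lt_trans h12 hgt2))),
            if_neg (not_lt.mpr hgt2.le)]
        rw [this]
        exact (huw s).congr_of_eventuallyEq hev
  -- T has right derivative g everywhere
  have hTright : ∀ s : ℝ, HasDerivWithinAt T (g s) (Ioi s) s := by
    intro s
    rcases eq_or_ne s s₁ with heq | hne1
    · subst heq
      have hgval : g s₁ = -w (L - s₁) := by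
        rw [hgdef]; simp only [if_neg (lt_irrefl s₁), if_pos h12]
      rw [hgval]
      have hbase : HasDerivWithinAt (fun s => u (L - s)) (-w (L - s₁)) (Ioi s₁) s₁ :=
        (hη'' s₁).hasDerivWithinAt
      refine hbase.congr_of_eventuallyEq ?_ ?_
      · have hm : Ioc s₁ s₂ ∈ 𝓝[Ioi s₁] s₁ := by
          have := Filter.inter_mem (self_mem_nhdsWithin (a := s₁) (s := Ioi s₁))
            (mem_nhdsWithin_of_mem_nhds (Iic_mem_nhds h12))
          rwa [Ioi_inter_Iic] at this
        filter_upwards [hm] with t ht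
        rw [hTdef]; simp only [if_neg (not_le.mpr ht.1), if_pos ht.2]
      · rw [hTdef]; simp only [if_pos le_rfl]
        rw [hLs₁, hu21]
    rcases eq_or_ne s s₂ with heq | hne2
    · subst heq
      have hgval : g s₂ = w s₂ := by
        rw [hgdef]
        simp only [if_neg (not_lt.mpr h12.le), if_neg (lt_irrefl s₂)]
      rw [hgval]
      have hbase : HasDerivWithinAt u (w s₂) (Ioi s₂) s₂ := (huw s₂).hasDerivWithinAt
      refine hbase.congr_of_eventuallyEq ?_ ?_
      · filter_upwards [self_mem_nhdsWithin] with t ht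
        rw [hTdef]
        simp only [if_neg (not_le.mpr (lt_trans h12 ht)), if_neg (not_le.mpr (mem_Ioi.mp ht))]
      · rw [hTdef]; simp only [if_neg (not_le.mpr h12), if_pos le_rfl]
        rw [hLs₂, hu21]
    · exact (hTg s hne1 hne2).hasDerivWithinAt
  -- g is measurable and bounded
  have hgmeas : Measurable g := by
    rw [hgdef]
    refine Measurable.ite (measurableSet_lt measurable_id measurable_const)
      hwcont.measurable ?_
    refine Measurable.ite (measurableSet_lt measurable_id measurable_const)
      (hwcont.comp (continuous_const.sub continuous_id)).measurable.neg
      hwcont.measurable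
  have hgnorm : ∀ s, ‖g s‖ = r / c^2 := by
    intro s
    rw [hgdef]
    rcases lt_or_ge s s₁ with h1 | h1
    · simp only [if_pos h1]; exact hnormw s
    rcases lt_or_ge s s₂ with h2 | h2
    · simp only [if_neg (not_lt.mpr h1), if_pos h2, norm_neg]; exact hnormw _
    · simp only [if_neg (not_lt.mpr h1), if_neg (not_lt.mpr h2)]; exact hnormw s
  have hgint : ∀ a b : ℝ, IntervalIntegrable g volume a b := by
    intro a b
    refine IntervalIntegrable.mono_fun (intervalIntegrable_const (c := r / c^2)) ?_ ?_
    · exact hgmeas.aestronglyMeasurable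
    · refine Filter.Eventually.of_forall fun s => ?_
      simp only [hgnorm s, Real.norm_eq_abs]
      exact le_abs_self _
  -- fundamental theorem of calculus for T
  have hftc : ∀ a b : ℝ, (∫ s in a..b, g s) = T b - T a := by
    intro a b
    exact intervalIntegral.integral_eq_sub_of_hasDeriv_right hTcont.continuousOn
      (fun x _ => hTright x) (hgint a b)
  -- deriv T agrees with g away from the two junctions
  have hae : ∀ᵐ s : ℝ, s ∉ ({s₁, s₂} : Set ℝ) := by
    have h0 : volume ({s₁, s₂} : Set ℝ) = 0 :=
      (Set.Countable.measure_zero (by simp) _)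
    exact measure_eq_zero_iff_ae_notMem.mp h0
  have hderivTg : ∀ s, s ∉ ({s₁, s₂} : Set ℝ) → deriv T s = g s := by
    intro s hs
    simp only [mem_insert_iff, mem_singleton_iff, not_or] at hs
    exact (hTg s hs.1 hs.2).deriv
  -- ξ is admissible
  have hAdm : Adm3 L (γ 0) (γ L) (deriv γ 0) (deriv γ L) ξ := by
    refine ⟨⟨?_, ?_, ?_, ?_⟩, ?_, ?_, ?_, ?_⟩
    · -- C¹
      have : ContDiff ℝ 1 ξ := by
        rw [contDiff_one_iff_deriv]
        exact ⟨fun s => (hξT s).differentiableAt, hξderiv ▸ hTcont⟩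
      exact this.contDiffOn
    · -- unit speed
      intro s _
      rw [hξderiv, hTdef]
      rcases le_or_gt s s₁ with h1 | h1
      · simp only [if_pos h1]; exact hnormu s
      rcases le_or_gt s s₂ with h2 | h2
      · simp only [if_neg (not_le.mpr h1), if_pos h2]; exact hnormu _
      · simp only [if_neg (not_le.mpr h1), if_neg (not_le.mpr h2)]; exact hnormu s
    · -- absolute continuity
      intro a _ b _
      rw [hξderiv]
      have hcongr : (∫ s in a..b, deriv (deriv ξ) s) = ∫ s in a..b, g s := by
        refine intervalIntegral.integral_congr_ae ?_
        filter_upwards [hae] with s hs _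
        rw [hξderiv, hderivTg s hs]
      rw [hξderiv] at hcongr
      rw [hcongr, hftc a b]
    · -- L²
      have hfin : IsFiniteMeasure (volume.restrict (Icc (0:ℝ) L)) := by
        constructor
        rw [Measure.restrict_apply_univ]
        exact measure_Icc_lt_top
      refine MemLp.of_bound ?_ (r / c^2) ?_
      · rw [hξderiv]
        exact (stronglyMeasurable_deriv T).aestronglyMeasurable
      · rw [hξderiv]
        refine (ae_restrict_of_ae ?_)
        filter_upwards [hae] with s hs
        rw [hderivTg s hs, hgnorm s]
    · exact hξγ₁ (mem_Iic.mpr hs₁0.le)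
    · exact hξγ₂ (mem_Ici.mpr hs₂L.le)
    · rw [hξderiv, hγderiv, hTdef]; simp only [if_pos hs₁0.le]
    · rw [hξderiv, hγderiv, hTdef]
      simp only [if_neg (not_le.mpr (lt_trans h12 hs₂L)), if_neg (not_le.mpr hs₂L)]
  -- ξ has the same bending energy as γ
  have hBen : Ben L ξ = Ben L γ := by
    rw [Ben, Ben]
    refine setIntegral_congr_ae measurableSet_Icc ?_
    filter_upwards [hae] with s hs _
    rw [hξderiv, hγderiv, huderiv, hderivTg s hs]
    rw [hgnorm s, hnormw s]
  -- hence ξ is also a global minimizer, so it is C² by hypothesis H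
  have hξmin : IsGlobalMin3 L (γ 0) (γ L) (deriv γ 0) (deriv γ L) ξ := by
    refine ⟨hAdm, fun ζ hζ => ?_⟩
    rw [hBen]
    exact Hmin.2 ζ hζ
  have hC2 : ContDiffOn ℝ 2 ξ (Icc 0 L) := H ξ hξmin
  -- extract the second derivative within [0, L]
  have hUD : UniqueDiffOn ℝ (Icc (0:ℝ) L) := uniqueDiffOn_Icc hL0
  set D1 : ℝ → R3 := derivWithin ξ (Icc 0 L) with hD1def
  set D2 : ℝ → R3 := derivWithin D1 (Icc 0 L) with hD2def
  have hD2cont : ContinuousOn D2 (Icc 0 L) := by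
    have h1 : ContDiffOn ℝ 1 D1 (Icc 0 L) := hC2.derivWithin hUD (by norm_num)
    exact h1.continuousOn_derivWithin hUD le_rfl
  have hD1T : ∀ s ∈ Ioo (0:ℝ) L, D1 s = T s := by
    intro s hs
    rw [hD1def, derivWithin_of_mem_nhds (Icc_mem_nhds hs.1 hs.2), hξderiv]
  have hD2g : ∀ s ∈ Ioo (0:ℝ) L, s ≠ s₁ → s ≠ s₂ → D2 s = g s := by
    intro s hs hne1 hne2
    rw [hD2def, derivWithin_of_mem_nhds (Icc_mem_nhds hs.1 hs.2)]
    have hev : D1 =ᶠ[nhds s] T := by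
      filter_upwards [Ioo_mem_nhds hs.1 hs.2] with t ht
      exact hD1T t ht
    rw [hev.deriv_eq]
    exact (hTg s hne1 hne2).deriv
  -- continuity of D2 at s₁ from the left gives D2 s₁ = w s₁
  have hmem₁ : s₁ ∈ Icc (0:ℝ) L := ⟨hs₁0.le, (lt_trans h12 hs₂L).le⟩
  have hcts : ContinuousAt D2 s₁ := by
    have := hD2cont s₁ hmem₁
    exact this.continuousAt (Icc_mem_nhds hs₁0 (lt_trans h12 hs₂L))
  have hneL : (𝓝[Ioo 0 s₁] s₁).NeBot := by
    rw [← mem_closure_iff_nhdsWithin_neBot, closure_Ioo (ne_of_lt hs₁0)]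
    exact ⟨hs₁0.le, le_rfl⟩
  have hneR : (𝓝[Ioo s₁ s₂] s₁).NeBot := by
    rw [← mem_closure_iff_nhdsWithin_neBot, closure_Ioo (ne_of_lt h12)]
    exact ⟨le_rfl, h12.le⟩
  have hlim1 : Tendsto D2 (𝓝[Ioo 0 s₁] s₁) (𝓝 (D2 s₁)) :=
    (hcts.continuousWithinAt).tendsto
  have hlim2 : Tendsto D2 (𝓝[Ioo s₁ s₂] s₁) (𝓝 (D2 s₁)) :=
    (hcts.continuousWithinAt).tendsto
  -- on the left D2 = w, on the right D2 = -w(L - ·)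
  have heq1 : D2 =ᶠ[𝓝[Ioo 0 s₁] s₁] w := by
    filter_upwards [self_mem_nhdsWithin] with s hs
    have hs' : s ∈ Ioo (0:ℝ) L := ⟨hs.1, lt_trans hs.2 (lt_trans h12 hs₂L)⟩
    rw [hD2g s hs' (ne_of_lt hs.2) (ne_of_lt (lt_trans hs.2 h12))]
    rw [hgdef]; simp only [if_pos hs.2]
  have heq2 : D2 =ᶠ[𝓝[Ioo s₁ s₂] s₁] (fun s => -w (L - s)) := by
    filter_upwards [self_mem_nhdsWithin] with s hs
    have hs' : s ∈ Ioo (0:ℝ) L := ⟨lt_trans hs₁0 hs.1, lt_trans hs.2 hs₂L⟩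
    rw [hD2g s hs' (ne_of_gt hs.1) (ne_of_lt hs.2)]
    rw [hgdef]; simp only [if_neg (not_lt.mpr hs.1.le), if_pos hs.2]
  have hwlim1 : Tendsto (fun s => w s) (𝓝[Ioo 0 s₁] s₁) (𝓝 (w s₁)) :=
    (hwcont.tendsto s₁).mono_left nhdsWithin_le_nhds
  have hwlim2 : Tendsto (fun s => -w (L - s)) (𝓝[Ioo s₁ s₂] s₁) (𝓝 (-w (L - s₁))) := by
    have : Continuous (fun s : ℝ => -w (L - s)) :=
      (hwcont.comp (continuous_const.sub continuous_id)).neg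
    exact (this.tendsto s₁).mono_left nhdsWithin_le_nhds
  have hD2s₁L : D2 s₁ = w s₁ :=
    tendsto_nhds_unique ((tendsto_congr' heq1).mp hlim1) hwlim1
  have hD2s₁R : D2 s₁ = -w s₁ := by
    have := tendsto_nhds_unique ((tendsto_congr' heq2).mp hlim2) hwlim2
    rwa [hLs₁, hw21] at this
  -- contradiction: w s₁ = 0 but ‖w s₁‖ = r/c² > 0
  have hww : w s₁ = -w s₁ := hD2s₁L.symm.trans hD2s₁R
  have h2 : (2:ℝ) • w s₁ = 0 := by
    rw [two_smul]
    nth_rewrite 1 [hww]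
    simp
  have hw0 : w s₁ = 0 := by
    rcases smul_eq_zero.mp h2 with h' | h'
    · norm_num at h'
    · exact h'
  have : (0:ℝ) < r / c^2 := by positivity
  rw [← hnormw s₁, hw0, norm_zero] at this
  exact lt_irrefl 0 this
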